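/- Let (∂Ω, σ) be Ahlfors regular with constant M (i.e. (R/2)^{n+1} ≤ σ(C_R(Q,τ) ∩ ∂Ω) ≤ M R^{n+1} for all boundary points and radii). Then for any (Y,s) ∈ Ω with parabolic distance δ(Y,s) to ∂Ω and any R > 0, the sublevel-set bound holds: for all β > (1/(2R))^{1/2}, the Lebesgue measure of {(Y,s) ∈ Ω ∩ C_{2R}(Q,τ) : δ(Y,s)^{−1/2} > β} is at most C R^{n+1} β^{−2}, and consequently ∫_{Ω ∩ C_{2R}(Q,τ)} δ(Y,s)^{−1/2} dY ds ≤ C R^{n+3/2}, with C depending only on n and M. -/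

import Mathlib

open MeasureTheory Real Set Filter Topology
open scoped ENNReal NNReal BigOperators

noncomputable section

abbrev Pt (n : ℕ) := EuclideanSpace ℝ (Fin n) × ℝ

/-- Parabolic distance between points of `ℝ^n × ℝ`. -/
def pdist {n : ℕ} (p q : Pt n) : ℝ := dist p.1 q.1 + Real.sqrt |p.2 - q.2|

/-- The parabolic cylinder of radius `R` centered at `c`. -/
def pcyl {n : ℕ} (c : Pt n) (R : ℝ) : Set (Pt n) :=
  {p | dist p.1 c.1 < R ∧ |p.2 - c.2| < R ^ 2}

/-- Parabolic distance from a point to the boundary of `Ω`. -/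
def pbdry {n : ℕ} (Ω : Set (Pt n)) (p : Pt n) : ℝ := sInf (pdist p '' frontier Ω)

/-- `σm` is Ahlfors regular (of parabolic dimension `n+1`) on `∂Ω` with constant `M`. -/
def Ahlfors {n : ℕ} (σm : Measure (Pt n)) (Ω : Set (Pt n)) (M : ℝ) : Prop :=
  ∀ Q ∈ frontier Ω, ∀ R : ℝ, 0 < R →
    ENNReal.ofReal ((R / 2) ^ (n + 1)) ≤ σm (pcyl Q R ∩ frontier Ω) ∧
      σm (pcyl Q R ∩ frontier Ω) ≤ ENNReal.ofReal (M * R ^ (n + 1))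

namespace Para

variable {n : ℕ}

lemma sqrt_add_le {x y : ℝ} (hx : 0 ≤ x) (hy : 0 ≤ y) :
    Real.sqrt (x + y) ≤ Real.sqrt x + Real.sqrt y := by
  have h := Real.sqrt_le_sqrt (show x + y ≤ (Real.sqrt x + Real.sqrt y) ^ 2 by
    nlinarith [Real.sq_sqrt hx, Real.sq_sqrt hy, Real.sqrt_nonneg x, Real.sqrt_nonneg y])
  rwa [Real.sqrt_sq (by positivity)] at h

lemma pdist_nonneg (p q : Pt n) : 0 ≤ pdist p q :=
  add_nonneg dist_nonneg (Real.sqrt_nonneg _)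

lemma pdist_comm (p q : Pt n) : pdist p q = pdist q p := by
  unfold pdist; rw [dist_comm, abs_sub_comm]

lemma pdist_triangle (p z q : Pt n) : pdist p q ≤ pdist p z + pdist z q := by
  unfold pdist
  have h1 : dist p.1 q.1 ≤ dist p.1 z.1 + dist z.1 q.1 := dist_triangle _ _ _
  have h2 : Real.sqrt |p.2 - q.2| ≤ Real.sqrt |p.2 - z.2| + Real.sqrt |z.2 - q.2| := by
    calc Real.sqrt |p.2 - q.2| ≤ Real.sqrt (|p.2 - z.2| + |z.2 - q.2|) :=
          Real.sqrt_le_sqrt (by have := abs_sub_le p.2 z.2 q.2; linarith)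
      _ ≤ _ := sqrt_add_le (abs_nonneg _) (abs_nonneg _)
  linarith

lemma continuous_pdist_comp {α : Type*} [TopologicalSpace α] {f g : α → Pt n}
    (hf : Continuous f) (hg : Continuous g) :
    Continuous fun x => pdist (f x) (g x) := by
  unfold pdist
  exact ((continuous_fst.comp hf).dist (continuous_fst.comp hg)).add
    (Real.continuous_sqrt.comp (((continuous_snd.comp hf).sub (continuous_snd.comp hg)).abs))

lemma bddBelow_pdist (Ω : Set (Pt n)) (p : Pt n) : BddBelow (pdist p '' frontier Ω) :=
  ⟨0, by rintro b ⟨q, _, rfl⟩; exact pdist_nonneg _ _⟩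

lemma pbdry_nonneg (Ω : Set (Pt n)) (p : Pt n) : 0 ≤ pbdry Ω p := by
  unfold pbdry
  rcases (pdist p '' frontier Ω).eq_empty_or_nonempty with h | h
  · rw [h, Real.sInf_empty]
  · exact le_csInf h (by rintro b ⟨q, _, rfl⟩; exact pdist_nonneg _ _)

lemma pbdry_le {Ω : Set (Pt n)} {q : Pt n} (hq : q ∈ frontier Ω) (p : Pt n) :
    pbdry Ω p ≤ pdist p q :=
  csInf_le (bddBelow_pdist Ω p) ⟨q, hq, rfl⟩

lemma exists_front {Ω : Set (Pt n)} (hne : (frontier Ω).Nonempty) {p : Pt n} {r : ℝ}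
    (h : pbdry Ω p < r) : ∃ q ∈ frontier Ω, pdist p q < r := by
  obtain ⟨b, ⟨q, hq, rfl⟩, hb⟩ :=
    (csInf_lt_iff (bddBelow_pdist Ω p) (hne.image _)).mp h
  exact ⟨q, hq, hb⟩

lemma pbdry_lip (Ω : Set (Pt n)) (p p' : Pt n) :
    pbdry Ω p ≤ pbdry Ω p' + pdist p p' := by
  rcases (frontier Ω).eq_empty_or_nonempty with h | h
  · unfold pbdry; rw [h, image_empty, Real.sInf_empty]
    simpa using pdist_nonneg p p'
  · have key : ∀ b ∈ pdist p' '' frontier Ω, pbdry Ω p - pdist p p' ≤ b := by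
      rintro b ⟨q, hq, rfl⟩
      have h1 := pbdry_le hq p
      have h2 := pdist_triangle p p' q
      linarith
    have h2 : pbdry Ω p - pdist p p' ≤ pbdry Ω p' := le_csInf (h.image _) key
    linarith

lemma abs_pbdry_sub_le (Ω : Set (Pt n)) (p q : Pt n) :
    |pbdry Ω p - pbdry Ω q| ≤ pdist p q := by
  rw [abs_sub_le_iff]
  constructor
  · have := pbdry_lip Ω p q; linarith
  · have := pbdry_lip Ω q p; rw [pdist_comm q p] at this; linarith

lemma continuous_pbdry (Ω : Set (Pt n)) : Continuous (pbdry Ω) := by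
  rw [Metric.continuous_iff]
  intro p ε hε
  refine ⟨min (ε / 2) ((ε / 2) ^ 2), by positivity, fun q hq => ?_⟩
  have hq1 : dist q.1 p.1 < ε / 2 :=
    lt_of_le_of_lt (le_trans (le_max_left _ _) (le_of_eq (Prod.dist_eq).symm))
      (lt_of_lt_of_le hq (min_le_left _ _))
  have hq2 : dist q.2 p.2 < (ε / 2) ^ 2 :=
    lt_of_le_of_lt (le_trans (le_max_right _ _) (le_of_eq (Prod.dist_eq).symm))
      (lt_of_lt_of_le hq (min_le_right _ _))
  have hq2' : Real.sqrt |q.2 - p.2| < ε / 2 := by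
    rw [Real.sqrt_lt' (by positivity)]
    rwa [Real.dist_eq] at hq2
  have hpd : pdist q p < ε := by
    unfold pdist; linarith
  calc dist (pbdry Ω q) (pbdry Ω p) = |pbdry Ω q - pbdry Ω p| := Real.dist_eq _ _
    _ ≤ pdist q p := abs_pbdry_sub_le Ω q p
    _ < ε := hpd

lemma isOpen_pcyl (c : Pt n) (ρ : ℝ) : IsOpen (pcyl c ρ) := by
  have h1 : Continuous fun p : Pt n => dist p.1 c.1 := continuous_fst.dist continuous_const
  have h2 : Continuous fun p : Pt n => |p.2 - c.2| := (continuous_snd.sub continuous_const).abs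
  have : pcyl c ρ = {p : Pt n | dist p.1 c.1 < ρ} ∩ {p : Pt n | |p.2 - c.2| < ρ ^ 2} := rfl
  rw [this]
  exact (isOpen_lt h1 continuous_const).inter (isOpen_lt h2 continuous_const)

lemma pcyl_prod (c : Pt n) (ρ : ℝ) :
    pcyl c ρ = Metric.ball c.1 ρ ×ˢ Metric.ball c.2 (ρ ^ 2) := by
  ext p
  simp only [pcyl, Set.mem_setOf_eq, Set.mem_prod, Metric.mem_ball, Real.dist_eq]

/-- The volume of the unit ball in `ℝ^n`. -/
def Kn (n : ℕ) : ℝ := (volume (Metric.ball (0 : EuclideanSpace ℝ (Fin n)) 1)).toReal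

lemma Kn_pos : 0 < Kn n :=
  ENNReal.toReal_pos (Metric.measure_ball_pos volume _ one_pos).ne' measure_ball_lt_top.ne

lemma volume_pcyl (c : Pt n) {ρ : ℝ} (hρ : 0 < ρ) :
    volume (pcyl c ρ) = ENNReal.ofReal (ρ ^ n * Kn n * (2 * ρ ^ 2)) := by
  have hb : volume (Metric.ball (0 : EuclideanSpace ℝ (Fin n)) 1) = ENNReal.ofReal (Kn n) :=
    (ENNReal.ofReal_toReal measure_ball_lt_top.ne).symm
  rw [pcyl_prod, Measure.volume_eq_prod, Measure.prod_prod,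
    Measure.addHaar_ball_of_pos _ _ hρ, Real.volume_ball, finrank_euclideanSpace_fin, hb,
    ← ENNReal.ofReal_mul (by positivity), ← ENNReal.ofReal_mul (mul_nonneg (by positivity) Kn_pos.le)]

lemma isOpen_pdist_lt_right (p : Pt n) (c : ℝ) : IsOpen {q : Pt n | pdist p q < c} :=
  isOpen_lt (continuous_pdist_comp continuous_const continuous_id') continuous_const

lemma isOpen_pdist_lt_left (q : Pt n) (c : ℝ) : IsOpen {p : Pt n | pdist p q < c} :=
  isOpen_lt (continuous_pdist_comp continuous_id' continuous_const) continuous_const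

/-- The collar constant. -/
def C1 (n : ℕ) (M : ℝ) : ℝ := Kn n * M * (2 ^ n * 8 * 6 ^ (n + 1) * 4 ^ (n + 1))

lemma C1_pos {M : ℝ} (hM : 1 ≤ M) : 0 < C1 n M := by
  have hK := Kn_pos (n := n)
  have hM0 : (0:ℝ) < M := lt_of_lt_of_le one_pos hM
  unfold C1; positivity

lemma collar {M : ℝ} (hM : 1 ≤ M) {Ω : Set (Pt n)} {σm : Measure (Pt n)}
    (hA : Ahlfors σm Ω M) {Q : Pt n} (hQ : Q ∈ frontier Ω) {R : ℝ} (hR : 0 < R)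
    {r : ℝ} (hr : 0 < r) (hr2 : r ≤ 2 * R) :
    volume {p : Pt n | p ∈ pcyl Q (2 * R) ∧ 0 < pbdry Ω p ∧ pbdry Ω p < r} ≤
      ENNReal.ofReal (C1 n M * R ^ (n + 1) * r) := by
  have hM0 : (0:ℝ) < M := lt_of_lt_of_le one_pos hM
  have hKn := Kn_pos (n := n)
  set S : Set (Pt n) := {p : Pt n | p ∈ pcyl Q (2 * R) ∧ 0 < pbdry Ω p ∧ pbdry Ω p < r}
    with hSdef
  have hSmeas : MeasurableSet S := by
    have hSeq : S = pcyl Q (2 * R) ∩ (pbdry Ω ⁻¹' Ioi 0 ∩ pbdry Ω ⁻¹' Iio r) := by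
      ext p
      simp only [hSdef, Set.mem_setOf_eq, Set.mem_inter_iff, Set.mem_preimage, Set.mem_Ioi,
        Set.mem_Iio, and_assoc]
    rw [hSeq]
    exact (isOpen_pcyl Q _).measurableSet.inter
      (((continuous_pbdry Ω).measurable measurableSet_Ioi).inter
       ((continuous_pbdry Ω).measurable measurableSet_Iio))
  set s : Set (Pt n) := pcyl Q (6 * R) ∩ frontier Ω with hsdef
  have hσs : σm s ≤ ENNReal.ofReal (M * (6 * R) ^ (n + 1)) := (hA Q hQ (6 * R) (by linarith)).2
  set ν : Measure (Pt n) := σm.restrict s with hν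
  haveI : IsFiniteMeasure ν := ⟨by
    rw [hν, Measure.restrict_apply_univ]
    exact lt_of_le_of_lt hσs ENNReal.ofReal_lt_top⟩
  set μ : Measure (Pt n) := volume.restrict S with hμ
  set f : Pt n → Pt n → ℝ≥0∞ := fun p q => if pdist p q < 2 * r then 1 else 0 with hf
  have hfm : AEMeasurable (Function.uncurry f) (μ.prod ν) := by
    have hopen : IsOpen {x : Pt n × Pt n | pdist x.1 x.2 < 2 * r} :=
      isOpen_lt (continuous_pdist_comp continuous_fst continuous_snd) continuous_const
    exact (Measurable.ite hopen.measurableSet measurable_const measurable_const).aemeasurable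
  have inner1 : ∀ p : Pt n, ∫⁻ q, f p q ∂ν = ν {q : Pt n | pdist p q < 2 * r} := by
    intro p
    have ho := isOpen_pdist_lt_right p (2 * r)
    rw [← lintegral_indicator_one ho.measurableSet]
    apply lintegral_congr; intro q
    simp [hf, Set.indicator_apply, Set.mem_setOf_eq]
  have inner2 : ∀ q : Pt n, ∫⁻ p, f p q ∂μ = μ {p : Pt n | pdist p q < 2 * r} := by
    intro q
    have ho := isOpen_pdist_lt_left q (2 * r)
    rw [← lintegral_indicator_one ho.measurableSet]
    apply lintegral_congr; intro p
    simp [hf, Set.indicator_apply, Set.mem_setOf_eq]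
  have hlow : ∀ p ∈ S,
      ENNReal.ofReal ((r / 4) ^ (n + 1)) ≤ ν {q : Pt n | pdist p q < 2 * r} := by
    intro p hp
    obtain ⟨hpc, hp0, hpr⟩ := hp
    obtain ⟨q₀, hq₀, hq₀r⟩ := exists_front ⟨Q, hQ⟩ hpr
    have hsub : pcyl q₀ (r / 2) ∩ frontier Ω ⊆ {q : Pt n | pdist p q < 2 * r} ∩ s := by
      rintro q ⟨hqc, hqf⟩
      have h1 : dist q₀.1 q.1 < r / 2 := by rw [dist_comm]; exact hqc.1
      have h2 : Real.sqrt |q₀.2 - q.2| < r / 2 := by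
        rw [Real.sqrt_lt' (by linarith)]
        rw [abs_sub_comm]; exact hqc.2
      have hd0 : pdist q₀ q < r := by unfold pdist; linarith
      have hdpq : pdist p q < 2 * r :=
        lt_of_le_of_lt (pdist_triangle p q₀ q) (by linarith)
      refine ⟨hdpq, ?_, hqf⟩
      have hp1 : dist p.1 Q.1 < 2 * R := hpc.1
      have hp2 : |p.2 - Q.2| < (2 * R) ^ 2 := hpc.2
      have hq1 : dist q.1 p.1 ≤ pdist p q := by
        rw [dist_comm]; unfold pdist; linarith [Real.sqrt_nonneg |p.2 - q.2|]
      have hq2 : Real.sqrt |p.2 - q.2| ≤ pdist p q := by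
        unfold pdist; linarith [dist_nonneg (x := p.1) (y := q.1)]
      have hq2' : |p.2 - q.2| < (2 * r) ^ 2 := by
        rw [← Real.sqrt_lt' (by linarith)]
        exact lt_of_le_of_lt hq2 hdpq
      constructor
      · calc dist q.1 Q.1 ≤ dist q.1 p.1 + dist p.1 Q.1 := dist_triangle _ _ _
          _ < 2 * r + 2 * R := by
              have := lt_of_le_of_lt hq1 hdpq; linarith
          _ ≤ (6 : ℝ) * R := by linarith
      · calc |q.2 - Q.2| ≤ |q.2 - p.2| + |p.2 - Q.2| := abs_sub_le _ _ _
          _ < (2 * r) ^ 2 + (2 * R) ^ 2 := by rw [abs_sub_comm]; linarith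
          _ ≤ (6 * R) ^ 2 := by nlinarith
    calc ENNReal.ofReal ((r / 4) ^ (n + 1)) = ENNReal.ofReal ((r / 2 / 2) ^ (n + 1)) := by
          norm_num [div_div]
      _ ≤ σm (pcyl q₀ (r / 2) ∩ frontier Ω) := (hA q₀ hq₀ (r / 2) (by linarith)).1
      _ ≤ ν {q : Pt n | pdist p q < 2 * r} := by
          rw [hν, Measure.restrict_apply (isOpen_pdist_lt_right p (2 * r)).measurableSet]
          exact measure_mono hsub
  have LB : ENNReal.ofReal ((r / 4) ^ (n + 1)) * volume S ≤ ∫⁻ p, ∫⁻ q, f p q ∂ν ∂μ := by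
    have e1 : ∫⁻ _ in S, ENNReal.ofReal ((r / 4) ^ (n + 1)) ∂volume
        = ENNReal.ofReal ((r / 4) ^ (n + 1)) * volume S := setLIntegral_const _ _
    rw [hμ, ← e1]
    refine setLIntegral_mono' hSmeas fun p hp => ?_
    rw [inner1 p]
    exact hlow p hp
  have UBslice : ∀ q : Pt n, μ {p : Pt n | pdist p q < 2 * r}
      ≤ ENNReal.ofReal ((2 * r) ^ n * Kn n * (2 * (2 * r) ^ 2)) := by
    intro q
    have ho := isOpen_pdist_lt_left q (2 * r)
    rw [hμ, Measure.restrict_apply ho.measurableSet]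
    refine le_trans (measure_mono ?_) (le_of_eq (volume_pcyl q (by linarith : (0:ℝ) < 2 * r)))
    rintro p ⟨hp1, _⟩
    have hq1 : dist p.1 q.1 ≤ pdist p q := by
      unfold pdist; linarith [Real.sqrt_nonneg |p.2 - q.2|]
    have hq2 : Real.sqrt |p.2 - q.2| ≤ pdist p q := by
      unfold pdist; linarith [dist_nonneg (x := p.1) (y := q.1)]
    exact ⟨lt_of_le_of_lt hq1 hp1,
      by rw [← Real.sqrt_lt' (by linarith)]; exact lt_of_le_of_lt hq2 hp1⟩
  have UB : ∫⁻ q, ∫⁻ p, f p q ∂μ ∂ν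
      ≤ ENNReal.ofReal ((2 * r) ^ n * Kn n * (2 * (2 * r) ^ 2)) *
        ENNReal.ofReal (M * (6 * R) ^ (n + 1)) := by
    calc ∫⁻ q, ∫⁻ p, f p q ∂μ ∂ν
        ≤ ∫⁻ _, ENNReal.ofReal ((2 * r) ^ n * Kn n * (2 * (2 * r) ^ 2)) ∂ν := by
          refine lintegral_mono fun q => ?_
          rw [inner2 q]; exact UBslice q
      _ = ENNReal.ofReal ((2 * r) ^ n * Kn n * (2 * (2 * r) ^ 2)) * ν univ := lintegral_const _
      _ ≤ _ := by
          rw [hν, Measure.restrict_apply_univ]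
          exact mul_le_mul_right hσs _
  have swap := lintegral_lintegral_swap hfm
  have main : ENNReal.ofReal ((r / 4) ^ (n + 1)) * volume S
      ≤ ENNReal.ofReal ((2 * r) ^ n * Kn n * (2 * (2 * r) ^ 2) * (M * (6 * R) ^ (n + 1))) := by
    rw [ENNReal.ofReal_mul (mul_nonneg (mul_nonneg (by positivity) hKn.le) (by positivity))]
    exact le_trans LB (le_trans (le_of_eq swap) UB)
  have hA0 : (0:ℝ) < (r / 4) ^ (n + 1) := by positivity
  have step : volume S ≤ ENNReal.ofReal
      (((2 * r) ^ n * Kn n * (2 * (2 * r) ^ 2) * (M * (6 * R) ^ (n + 1))) /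
        ((r / 4) ^ (n + 1))) := by
    rw [ENNReal.ofReal_div_of_pos hA0,
      ENNReal.le_div_iff_mul_le (Or.inl (ne_of_gt (ENNReal.ofReal_pos.mpr hA0)))
        (Or.inl ENNReal.ofReal_ne_top), mul_comm]
    exact main
  refine le_trans step (le_of_eq ?_)
  congr 1
  have hr' : r ≠ 0 := ne_of_gt hr
  unfold C1
  field_simp
  have h4 : ((1:ℝ) / 4) ^ n * 4 ^ n = 1 := by rw [← mul_pow]; norm_num
  linear_combination (-(r * r ^ n * R * R ^ n * 2 ^ n * 6 ^ n * 48)) * h4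

lemma rpow_neg_half_eq {x : ℝ} (hx : 0 ≤ x) :
    x ^ (-(1:ℝ) / 2) = (Real.sqrt x)⁻¹ := by
  rw [show (-(1:ℝ) / 2) = -(1 / 2 : ℝ) by ring, Real.rpow_neg hx, Real.sqrt_eq_rpow]

lemma sub_aux {Ω : Set (Pt n)} {p : Pt n} {t : ℝ} (ht : 0 < t)
    (h : t < pbdry Ω p ^ (-(1:ℝ) / 2)) :
    0 < pbdry Ω p ∧ pbdry Ω p < 1 / t ^ 2 := by
  have hδ0 : 0 ≤ pbdry Ω p := pbdry_nonneg _ _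
  have hpos : 0 < pbdry Ω p := by
    rcases hδ0.eq_or_lt with h0 | h0
    · exfalso
      rw [← h0, Real.zero_rpow (by norm_num)] at h
      linarith
    · exact h0
  refine ⟨hpos, ?_⟩
  rw [rpow_neg_half_eq hδ0] at h
  have hs : 0 < Real.sqrt (pbdry Ω p) := Real.sqrt_pos.mpr hpos
  have hst : Real.sqrt (pbdry Ω p) * t < 1 := by
    have h2 := mul_lt_mul_of_pos_left h hs
    rwa [mul_inv_cancel₀ hs.ne'] at h2
  rw [lt_div_iff₀ (by positivity)]
  nlinarith [Real.sq_sqrt hδ0, hst, mul_nonneg (Real.sqrt_nonneg (pbdry Ω p)) ht.le]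

lemma final_real (n : ℕ) {KK C R : ℝ} (hK : 0 < KK) (hC : 0 < C) (hR : 0 < R) :
    8 * 2 ^ n * KK * R ^ (n + 2) * Real.sqrt (1 / (2 * R)) + C * R ^ (n + 1) * Real.sqrt (2 * R)
      ≤ (8 * 2 ^ n * KK + 3 * C) * R ^ ((n : ℝ) + 3 / 2) := by
  have hu : Real.sqrt R * Real.sqrt R = R := Real.mul_self_sqrt hR.le
  have hsR : 0 < Real.sqrt R := Real.sqrt_pos.mpr hR
  have hv : 0 < Real.sqrt 2 := Real.sqrt_pos.mpr (by norm_num)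
  have h2 : Real.sqrt (2 * R) = Real.sqrt 2 * Real.sqrt R := Real.sqrt_mul (by norm_num) R
  have h1 : Real.sqrt (1 / (2 * R)) = (Real.sqrt 2 * Real.sqrt R)⁻¹ := by
    rw [one_div, Real.sqrt_inv, h2]
  have hs2 : (1:ℝ) ≤ Real.sqrt 2 := by
    rw [show (1:ℝ) = Real.sqrt 1 from (Real.sqrt_one).symm]
    exact Real.sqrt_le_sqrt (by norm_num)
  have hs2' : Real.sqrt 2 ≤ 2 := by
    nlinarith [Real.mul_self_sqrt (show (0:ℝ) ≤ 2 by norm_num), hv]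
  have hrp : R ^ ((n : ℝ) + 3 / 2) = R ^ (n + 1) * Real.sqrt R := by
    rw [show ((n : ℝ) + 3 / 2) = ((n + 1 : ℕ) : ℝ) + (1 / 2 : ℝ) by push_cast; ring,
      Real.rpow_add hR, Real.rpow_natCast, Real.sqrt_eq_rpow]
  rw [h1, h2, hrp]
  have hP : 0 < R ^ (n + 1) := pow_pos hR _
  have e : 8 * 2 ^ n * KK * R ^ (n + 2) * (Real.sqrt 2 * Real.sqrt R)⁻¹
      = 8 * 2 ^ n * KK * (R ^ (n + 1) * Real.sqrt R) * (Real.sqrt 2)⁻¹ := by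
    have hx : R ^ (n + 2) = R ^ (n + 1) * (Real.sqrt R * Real.sqrt R) := by
      rw [hu, ← pow_succ]
    rw [hx, mul_inv]
    field_simp
  have hvinv : (Real.sqrt 2)⁻¹ ≤ 1 := by
    rw [inv_le_one_iff₀]
    right; exact hs2
  calc 8 * 2 ^ n * KK * R ^ (n + 2) * (Real.sqrt 2 * Real.sqrt R)⁻¹
        + C * R ^ (n + 1) * (Real.sqrt 2 * Real.sqrt R)
      = 8 * 2 ^ n * KK * (R ^ (n + 1) * Real.sqrt R) * (Real.sqrt 2)⁻¹
        + C * R ^ (n + 1) * (Real.sqrt 2 * Real.sqrt R) := by rw [e]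
    _ ≤ 8 * 2 ^ n * KK * (R ^ (n + 1) * Real.sqrt R) * 1
        + C * R ^ (n + 1) * (2 * Real.sqrt R) := by gcongr
    _ ≤ (8 * 2 ^ n * KK + 3 * C) * (R ^ (n + 1) * Real.sqrt R) := by
        nlinarith [mul_pos (mul_pos hC hP) hsR]

end Para

open Para

/-- in a domain with Ahlfors regular boundary (constant `M`), the sublevel
sets of the parabolic boundary distance satisfy
`|{(Y,s) ∈ Ω ∩ C_{2R} : δ(Y,s)^{-1/2} > β}| ≤ C R^{n+1} β^{-2}` for
`β > (1/(2R))^{1/2}`, and consequently `∫_{Ω ∩ C_{2R}} δ(Y,s)^{-1/2} ≤ C R^{n+3/2}`,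
with `C = C(n, M)`. -/
theorem statement3 (n : ℕ) (M : ℝ) (hM : 1 ≤ M) :
    ∃ C : ℝ, 0 < C ∧
      ∀ (Ω : Set (Pt n)) (σm : Measure (Pt n)),
        Ahlfors σm Ω M →
        ∀ Q ∈ frontier Ω, ∀ R : ℝ, 0 < R →
          (∀ β : ℝ, Real.sqrt (1 / (2 * R)) < β →
            volume {p : Pt n | p ∈ Ω ∩ pcyl Q (2 * R) ∧ β < pbdry Ω p ^ (-(1 : ℝ) / 2)} ≤
              ENNReal.ofReal (C * R ^ (n + 1) / β ^ 2)) ∧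
          ∫⁻ p in Ω ∩ pcyl Q (2 * R), ENNReal.ofReal (pbdry Ω p ^ (-(1 : ℝ) / 2)) ≤
            ENNReal.ofReal (C * R ^ ((n : ℝ) + 3 / 2)) := by
  have hKn := Kn_pos (n := n)
  have hC1 := C1_pos (n := n) hM
  have h2n : (0:ℝ) < 2 ^ n := by positivity
  refine ⟨8 * 2 ^ n * Kn n + 3 * C1 n M, by positivity, ?_⟩
  intro Ω σm hA Q hQ R hR
  have hT0 : (0:ℝ) < 1 / (2 * R) := by positivity
  have hT : 0 < Real.sqrt (1 / (2 * R)) := Real.sqrt_pos.mpr hT0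
  constructor
  · -- sublevel set bound
    intro β hβ
    have hβ0 : 0 < β := lt_trans hT hβ
    have hβ2 : 1 / β ^ 2 ≤ 2 * R := by
      have h2 : 1 / (2 * R) < β ^ 2 := (Real.sqrt_lt' hβ0).mp hβ
      rw [div_le_iff₀ (by positivity : (0:ℝ) < β ^ 2)]
      rw [div_lt_iff₀ (by positivity : (0:ℝ) < 2 * R)] at h2
      nlinarith [h2]
    have hsub : {p : Pt n | p ∈ Ω ∩ pcyl Q (2 * R) ∧ β < pbdry Ω p ^ (-(1 : ℝ) / 2)}
        ⊆ {p : Pt n | p ∈ pcyl Q (2 * R) ∧ 0 < pbdry Ω p ∧ pbdry Ω p < 1 / β ^ 2} := by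
      rintro p ⟨⟨_, hpc⟩, hpβ⟩
      obtain ⟨h1, h2⟩ := sub_aux hβ0 hpβ
      exact ⟨hpc, h1, h2⟩
    refine le_trans (measure_mono hsub)
      (le_trans (collar hM hA hQ hR (by positivity) hβ2) ?_)
    apply ENNReal.ofReal_le_ofReal
    rw [show C1 n M * R ^ (n + 1) * (1 / β ^ 2) = C1 n M * R ^ (n + 1) / β ^ 2 by ring]
    gcongr
    linarith [mul_pos (mul_pos (show (0:ℝ) < 8 by norm_num) h2n) hKn]
  · -- the integral bound
    set g : Pt n → ℝ := fun p => (Real.sqrt (pbdry Ω p))⁻¹ with hg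
    have hgeq : ∀ p : Pt n, pbdry Ω p ^ (-(1:ℝ) / 2) = g p := fun p =>
      rpow_neg_half_eq (pbdry_nonneg Ω p)
    have hgm : Measurable g := ((Real.continuous_sqrt.comp (continuous_pbdry Ω)).measurable).inv
    have hgnn : ∀ p, 0 ≤ g p := fun p => inv_nonneg.mpr (Real.sqrt_nonneg _)
    set μ2 : Measure (Pt n) := volume.restrict (pcyl Q (2 * R)) with hμ2
    have step1 : ∫⁻ p in Ω ∩ pcyl Q (2 * R), ENNReal.ofReal (pbdry Ω p ^ (-(1:ℝ) / 2))
        ≤ ∫⁻ p, ENNReal.ofReal (g p) ∂μ2 := by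
      apply lintegral_mono' (Measure.restrict_mono inter_subset_right le_rfl)
      intro p
      exact le_of_eq (congrArg ENNReal.ofReal (hgeq p))
    have layer := lintegral_eq_lintegral_meas_lt μ2 (Eventually.of_forall hgnn) hgm.aemeasurable
    set T := Real.sqrt (1 / (2 * R)) with hTdef
    have hVtot : μ2 univ = ENNReal.ofReal ((2 * R) ^ n * Kn n * (2 * (2 * R) ^ 2)) := by
      rw [hμ2, Measure.restrict_apply_univ, volume_pcyl Q (by positivity)]
    have hGsmall : ∀ t ∈ Ioc (0:ℝ) T, μ2 {a : Pt n | t < g a}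
        ≤ ENNReal.ofReal ((2 * R) ^ n * Kn n * (2 * (2 * R) ^ 2)) := fun t _ =>
      le_trans (measure_mono (subset_univ _)) (le_of_eq hVtot)
    have hGbig : ∀ t ∈ Ioi T, μ2 {a : Pt n | t < g a}
        ≤ ENNReal.ofReal (C1 n M * R ^ (n + 1) * (1 / t ^ 2)) := by
      intro t ht
      have ht0 : 0 < t := lt_trans hT ht
      have hr2 : 1 / t ^ 2 ≤ 2 * R := by
        have h2 : 1 / (2 * R) < t ^ 2 := (Real.sqrt_lt' ht0).mp ht
        rw [div_le_iff₀ (by positivity : (0:ℝ) < t ^ 2)]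
        rw [div_lt_iff₀ (by positivity : (0:ℝ) < 2 * R)] at h2
        nlinarith [h2]
      have hmeas : MeasurableSet {a : Pt n | t < g a} := measurableSet_lt measurable_const hgm
      rw [hμ2, Measure.restrict_apply hmeas]
      refine le_trans (measure_mono ?_) (collar hM hA hQ hR (by positivity) hr2)
      rintro p ⟨hpt, hpc⟩
      have hax := sub_aux ht0 (show t < pbdry Ω p ^ (-(1:ℝ) / 2) by rw [hgeq p]; exact hpt)
      exact ⟨hpc, hax.1, hax.2⟩
    have hsplit : ∫⁻ t in Ioi (0:ℝ), μ2 {a : Pt n | t < g a}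
        = (∫⁻ t in Ioc 0 T, μ2 {a : Pt n | t < g a})
          + ∫⁻ t in Ioi T, μ2 {a : Pt n | t < g a} := by
      rw [← Ioc_union_Ioi_eq_Ioi hT.le]
      exact lintegral_union measurableSet_Ioi (Ioc_disjoint_Ioi le_rfl)
    have hpiece1 : ∫⁻ t in Ioc (0:ℝ) T, μ2 {a : Pt n | t < g a}
        ≤ ENNReal.ofReal (8 * 2 ^ n * Kn n * R ^ (n + 2) * T) := by
      refine le_trans (setLIntegral_mono' measurableSet_Ioc hGsmall) ?_
      rw [setLIntegral_const, Real.volume_Ioc, sub_zero,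
        ← ENNReal.ofReal_mul (mul_nonneg (mul_nonneg (by positivity) hKn.le) (by positivity))]
      exact ENNReal.ofReal_le_ofReal (le_of_eq (by ring))
    have hpiece2 : ∫⁻ t in Ioi T, μ2 {a : Pt n | t < g a}
        ≤ ENNReal.ofReal (C1 n M * R ^ (n + 1) * Real.sqrt (2 * R)) := by
      refine le_trans (setLIntegral_mono' measurableSet_Ioi hGbig) ?_
      have hcongr : ∀ t ∈ Ioi T, ENNReal.ofReal (C1 n M * R ^ (n + 1) * (1 / t ^ 2))
          = ENNReal.ofReal (C1 n M * R ^ (n + 1) * t ^ (-2:ℝ)) := by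
        intro t ht
        have ht0 : 0 < t := lt_trans hT ht
        congr 1
        rw [show (-2:ℝ) = -((2:ℕ):ℝ) by norm_num, Real.rpow_neg ht0.le, Real.rpow_natCast,
          one_div]
      rw [setLIntegral_congr_fun measurableSet_Ioi hcongr]
      have hint : IntegrableOn (fun t : ℝ => C1 n M * R ^ (n + 1) * t ^ (-2:ℝ)) (Ioi T) :=
        (integrableOn_Ioi_rpow_of_lt (by norm_num) hT).const_mul _
      have hnn : 0 ≤ᵐ[volume.restrict (Ioi T)]
          fun t : ℝ => C1 n M * R ^ (n + 1) * t ^ (-2:ℝ) := by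
        refine (ae_restrict_iff' measurableSet_Ioi).mpr (ae_of_all _ fun t ht => ?_)
        have ht0 : 0 < t := lt_trans hT ht
        exact mul_nonneg (mul_nonneg hC1.le (by positivity)) (Real.rpow_nonneg ht0.le _)
      rw [← ofReal_integral_eq_lintegral_ofReal hint hnn]
      have hval : ∫ t in Ioi T, C1 n M * R ^ (n + 1) * t ^ (-2:ℝ)
          = C1 n M * R ^ (n + 1) * T⁻¹ := by
        rw [integral_const_mul, integral_Ioi_rpow_of_lt (by norm_num) hT]
        rw [show (-2:ℝ) + 1 = -1 by norm_num, Real.rpow_neg_one]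
        ring
      rw [hval]
      have hTinv : T⁻¹ = Real.sqrt (2 * R) := by
        rw [hTdef, one_div, Real.sqrt_inv, inv_inv]
      rw [hTinv]
    calc ∫⁻ p in Ω ∩ pcyl Q (2 * R), ENNReal.ofReal (pbdry Ω p ^ (-(1:ℝ) / 2))
        ≤ ∫⁻ p, ENNReal.ofReal (g p) ∂μ2 := step1
      _ = ∫⁻ t in Ioi (0:ℝ), μ2 {a : Pt n | t < g a} := layer
      _ = (∫⁻ t in Ioc 0 T, μ2 {a : Pt n | t < g a})
          + ∫⁻ t in Ioi T, μ2 {a : Pt n | t < g a} := hsplit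
      _ ≤ ENNReal.ofReal (8 * 2 ^ n * Kn n * R ^ (n + 2) * T)
          + ENNReal.ofReal (C1 n M * R ^ (n + 1) * Real.sqrt (2 * R)) :=
            add_le_add hpiece1 hpiece2
      _ = ENNReal.ofReal (8 * 2 ^ n * Kn n * R ^ (n + 2) * T
          + C1 n M * R ^ (n + 1) * Real.sqrt (2 * R)) := by
            rw [ENNReal.ofReal_add
              (mul_nonneg (mul_nonneg (mul_nonneg (by positivity) hKn.le) (by positivity))
                hT.le)
              (mul_nonneg (mul_nonneg hC1.le (by positivity)) (Real.sqrt_nonneg _))]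
      _ ≤ ENNReal.ofReal ((8 * 2 ^ n * Kn n + 3 * C1 n M) * R ^ ((n : ℝ) + 3 / 2)) :=
            ENNReal.ofReal_le_ofReal (final_real n hKn hC1 hR)
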